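/- Let G₁, G₂ be connected graphs and t, n positive integers with 2 ≤ t < n and n − t even. Then Shu^t_n(G₁) ≅ Shu^t_n(G₂) if and only if G₁ ≅ G₂. -/

import Mathlib

/-- The `(t,n)`-shuriken graph of `G` (with `1`-indexed copies `1,…,n` of the
paper encoded as `Fin n`, `0`-indexed). A new vertex `z` (encoded `none`) is
added to `G`, and `n` copies are taken. Edges: copies of edges of `G` across
all pairs of copies; all edges within copy `i` for `i ≤ t`; and all edges
between copies `i` and `n + t + 1 - i` for `t + 1 ≤ i ≤ (n + t)/2`. -/
def Shu (t n : ℕ) {V : Type*} (G : SimpleGraph V) :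
    SimpleGraph (Fin n × Option V) where
  Adj x y :=
    (∃ u v, x.2 = some u ∧ y.2 = some v ∧ G.Adj u v) ∨
    (x.1 = y.1 ∧ x.1.val < t ∧ x.2 ≠ y.2) ∨
    (x.1 ≠ y.1 ∧ x.1.val + y.1.val = n + t - 1 ∧ t ≤ x.1.val ∧ t ≤ y.1.val)
  symm := by
    constructor
    rintro x y (⟨u, v, h1, h2, h3⟩ | ⟨h1, h2, h3⟩ | ⟨h1, h2, h3, h4⟩)
    · exact Or.inl ⟨v, u, h2, h1, h3.symm⟩
    · exact Or.inr (Or.inl ⟨h1.symm, h1 ▸ h2, h3.symm⟩)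
    · exact Or.inr (Or.inr ⟨h1.symm, by omega, h4, h3⟩)
  loopless := by
    constructor
    rintro x (⟨u, v, h1, h2, h3⟩ | ⟨h1, h2, h3⟩ | ⟨h1, h2, h3⟩)
    · rw [h1] at h2
      injection h2 with h
      exact G.irrefl (v := u) (h ▸ h3)
    · exact h3 rfl
    · exact h1 rfl

namespace ShuAux

variable {W W' : Type*}

/-- `z` has a clique neighbourhood. -/
def IsZ1 (H : SimpleGraph W) (z : W) : Prop :=
  ∀ ⦃x y⦄, H.Adj z x → H.Adj z y → x ≠ y → H.Adj x y

/-- `x` and `x'` have the same neighbours outside the closed neighbourhoods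
of `z` and `z'`. -/
def OutEq (H : SimpleGraph W) (z z' x x' : W) : Prop :=
  ∀ w, ¬ H.Adj z w → ¬ H.Adj z' w → w ≠ z → w ≠ z' → (H.Adj x w ↔ H.Adj x' w)

/-- The recovered adjacency relation relative to a `Z1`-vertex `z`. -/
def Rel (H : SimpleGraph W) (z x y : W) : Prop :=
  H.Adj z x ∧ H.Adj z y ∧ ∃ z' x', IsZ1 H z' ∧ z' ≠ z ∧ H.Adj z' x' ∧
    OutEq H z z' x x' ∧ H.Adj x' y

lemma IsZ1.map {H : SimpleGraph W} {H' : SimpleGraph W'} (φ : H ≃g H') {z : W}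
    (h : IsZ1 H z) : IsZ1 H' (φ z) := by
  intro x y hx hy hxy
  obtain ⟨a, rfl⟩ := φ.surjective x
  obtain ⟨b, rfl⟩ := φ.surjective y
  exact φ.map_adj_iff.mpr (h (φ.map_adj_iff.mp hx) (φ.map_adj_iff.mp hy)
    (fun hab => hxy (by rw [hab])))

lemma OutEq.map {H : SimpleGraph W} {H' : SimpleGraph W'} (φ : H ≃g H') {z z' x x' : W}
    (h : OutEq H z z' x x') : OutEq H' (φ z) (φ z') (φ x) (φ x') := by
  intro w hw1 hw2 hw3 hw4
  obtain ⟨a, rfl⟩ := φ.surjective w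
  rw [φ.map_adj_iff, φ.map_adj_iff]
  exact h a (fun hh => hw1 (φ.map_adj_iff.mpr hh))
    (fun hh => hw2 (φ.map_adj_iff.mpr hh))
    (fun hh => hw3 (by rw [hh])) (fun hh => hw4 (by rw [hh]))

lemma Rel.map {H : SimpleGraph W} {H' : SimpleGraph W'} (φ : H ≃g H') {z x y : W}
    (h : Rel H z x y) : Rel H' (φ z) (φ x) (φ y) := by
  obtain ⟨h1, h2, z', x', hz1, hne, hzx, hout, hxy⟩ := h
  exact ⟨φ.map_adj_iff.mpr h1, φ.map_adj_iff.mpr h2, φ z', φ x', hz1.map φ,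
    fun hh => hne (φ.injective hh), φ.map_adj_iff.mpr hzx, hout.map φ,
    φ.map_adj_iff.mpr hxy⟩

variable {V : Type*} {G : SimpleGraph V} {t n : ℕ}

lemma shu_adj {x y : Fin n × Option V} : (Shu t n G).Adj x y ↔
    ((∃ u v, x.2 = some u ∧ y.2 = some v ∧ G.Adj u v) ∨
    (x.1 = y.1 ∧ x.1.val < t ∧ x.2 ≠ y.2) ∨
    (x.1 ≠ y.1 ∧ x.1.val + y.1.val = n + t - 1 ∧ t ≤ x.1.val ∧ t ≤ y.1.val)) :=
  Iff.rfl

/-- Characterisation of the neighbours of `z_i` for `i < t`. -/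
lemma adj_none {i : Fin n} (hi : i.val < t) {x : Fin n × Option V} :
    (Shu t n G).Adj (i, none) x ↔ x.1 = i ∧ x.2 ≠ none := by
  rw [shu_adj]
  constructor
  · rintro (⟨u, v, h1, -, -⟩ | ⟨h1, -, h3⟩ | ⟨-, -, h3, -⟩)
    · exact absurd h1 (by simp)
    · exact ⟨h1.symm, fun h => h3 (h ▸ rfl)⟩
    · exact absurd h3 (by simpa using hi.not_ge)
  · rintro ⟨h1, h2⟩
    exact Or.inr (Or.inl ⟨h1.symm, hi, fun h => h2 h.symm⟩)

lemma adj_some_lt {i k : Fin n} (hi : i.val < t) (hk : k ≠ i) {u : V} {c : V} :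
    (Shu t n G).Adj (i, some u) (k, some c) ↔ G.Adj u c := by
  rw [shu_adj]
  constructor
  · rintro (⟨a, b, ha, hb, hab⟩ | ⟨h1, -, -⟩ | ⟨-, -, h3, -⟩)
    · simp only [Option.some.injEq] at ha hb
      exact ha ▸ hb ▸ hab
    · exact absurd h1.symm hk
    · exact absurd h3 (by simpa using hi.not_ge)
  · exact fun h => Or.inl ⟨u, c, rfl, rfl, h⟩

lemma not_adj_some_none {i k : Fin n} (hi : i.val < t) (hk : k ≠ i) {u : V} :
    ¬ (Shu t n G).Adj (i, some u) (k, none) := by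
  rw [shu_adj]
  rintro (⟨a, b, -, hb, -⟩ | ⟨h1, -, -⟩ | ⟨-, -, h3, -⟩)
  · exact absurd hb (by simp)
  · exact hk h1.symm
  · exact absurd h3 (by simpa using hi.not_ge)

lemma exists_adj (hc : G.Connected) (hE : ∃ a b, G.Adj a b) (v : V) :
    ∃ u, G.Adj v u := by
  obtain ⟨a, b, hab⟩ := hE
  obtain ⟨p⟩ := hc.preconnected v a
  cases p with
  | nil => exact ⟨b, hab⟩
  | cons h _ => exact ⟨_, h⟩

lemma isZ1_iff (hc : G.Connected) (hE : ∃ a b, G.Adj a b)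
    (ht : 2 ≤ t) (htn : t < n) (hpar : Even (n - t)) {i : Fin n} {oz : Option V} :
    IsZ1 (Shu t n G) (i, oz) ↔ oz = none ∧ i.val < t := by
  constructor
  · intro h
    match oz with
    | some v =>
      exfalso
      obtain ⟨u, hvu⟩ := exists_adj hc hE v
      have h0 : (0 : ℕ) < n := by omega
      have h1 : (1 : ℕ) < n := by omega
      have hx : (Shu t n G).Adj (i, some v) (⟨0, h0⟩, some u) :=
        Or.inl ⟨v, u, rfl, rfl, hvu⟩
      have hy : (Shu t n G).Adj (i, some v) (⟨1, h1⟩, some u) :=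
        Or.inl ⟨v, u, rfl, rfl, hvu⟩
      have hne : ((⟨0, h0⟩ : Fin n), some u) ≠ ((⟨1, h1⟩ : Fin n), some u) := by
        simp [Prod.ext_iff, Fin.ext_iff]
      rcases h hx hy hne with (⟨a, b, ha, hb, hab⟩ | ⟨h1', -, -⟩ | ⟨-, -, h3, -⟩)
      · simp only [Option.some.injEq] at ha hb
        rw [← ha, ← hb] at hab
        exact G.irrefl hab
      · have := congrArg Fin.val h1'
        simp at this
      · exact absurd h3 (by omega : ¬ t ≤ (0 : ℕ))
    | none =>
      refine ⟨rfl, ?_⟩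
      by_contra hit
      push_neg at hit
      have hit' : t ≤ i.val := hit
      obtain ⟨k, hk⟩ := hpar
      have hin : i.val < n := i.isLt
      have hi' : n + t - 1 - i.val < n := by omega
      obtain ⟨v⟩ := hc.nonempty
      have hodd : i.val ≠ n + t - 1 - i.val := by omega
      have hadj : ∀ ox : Option V,
          (Shu t n G).Adj (i, none) ((⟨n + t - 1 - i.val, hi'⟩ : Fin n), ox) := by
        intro ox
        refine Or.inr (Or.inr ⟨?_, ?_, hit', ?_⟩)
        · intro hh
          exact hodd (congrArg Fin.val hh)
        · show i.val + (n + t - 1 - i.val) = n + t - 1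
          omega
        · show t ≤ n + t - 1 - i.val
          omega
      have hne : (((⟨n + t - 1 - i.val, hi'⟩ : Fin n), (none : Option V)) :
          Fin n × Option V) ≠ ((⟨n + t - 1 - i.val, hi'⟩ : Fin n), some v) := by simp
      rcases h (hadj none) (hadj (some v)) hne with
        (⟨a, b, ha, -, -⟩ | ⟨-, h2, -⟩ | ⟨h1', -, -⟩)
      · exact absurd ha (by simp)
      · have h2' : n + t - 1 - i.val < t := h2
        omega
      · exact h1' rfl
  · rintro ⟨rfl, hi⟩
    intro x y hx hy hxy
    rw [adj_none hi] at hx hy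
    refine Or.inr (Or.inl ⟨hx.1.trans hy.1.symm, hx.1 ▸ hi, ?_⟩)
    intro hh
    exact hxy (Prod.ext (hx.1.trans hy.1.symm) hh)

lemma rel_iff (hc : G.Connected) (hE : ∃ a b, G.Adj a b)
    (ht : 2 ≤ t) (htn : t < n) (hpar : Even (n - t)) {i : Fin n} (hi : i.val < t)
    {x y : Fin n × Option V} :
    Rel (Shu t n G) (i, none) x y ↔
      ∃ u v, x = (i, some u) ∧ y = (i, some v) ∧ G.Adj u v := by
  constructor
  · rintro ⟨hzx, hzy, z', x', hz1, hzne, hz'x', hout, hx'y⟩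
    obtain ⟨x1, x2⟩ := x
    obtain ⟨y1, y2⟩ := y
    rw [adj_none hi] at hzx hzy
    obtain ⟨hx1, hx2⟩ := hzx
    obtain ⟨hy1, hy2⟩ := hzy
    obtain ⟨u, rfl⟩ := Option.ne_none_iff_exists'.mp hx2
    obtain ⟨v, rfl⟩ := Option.ne_none_iff_exists'.mp hy2
    obtain rfl : i = x1 := hx1.symm
    obtain rfl : i = y1 := hy1.symm
    obtain ⟨j, oz'⟩ := z'
    obtain ⟨hoz', hj⟩ := (isZ1_iff hc hE ht htn hpar).mp hz1
    subst hoz'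
    have hji : j ≠ i := fun hh => hzne (by rw [hh])
    obtain ⟨x1', x2'⟩ := x'
    rw [adj_none hj] at hz'x'
    obtain ⟨hx1', hx2'⟩ := hz'x'
    obtain ⟨w, rfl⟩ := Option.ne_none_iff_exists'.mp hx2'
    obtain rfl : j = x1' := hx1'.symm
    -- pick a third copy index
    have hm : ∃ m : ℕ, m < n ∧ m ≠ i.val ∧ m ≠ j.val := by
      refine ⟨if 0 = i.val ∨ 0 = j.val then (if 1 = i.val ∨ 1 = j.val then 2 else 1)
        else 0, ?_⟩
      have : i.val ≠ j.val := fun hh => hji (Fin.ext hh.symm)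
      split_ifs with h1 h2 <;> omega
    obtain ⟨m, hmn, hmi, hmj⟩ := hm
    set k : Fin n := ⟨m, hmn⟩ with hkdef
    have hki : k ≠ i := fun hh => hmi (by rw [← hh])
    have hkj : k ≠ j := fun hh => hmj (by rw [← hh])
    have hNuw : ∀ c : V, G.Adj u c ↔ G.Adj w c := by
      intro c
      have h1 : ¬ (Shu t n G).Adj (i, none) (k, some c) := by
        rw [adj_none hi]; rintro ⟨hh, -⟩; exact hki hh
      have h2 : ¬ (Shu t n G).Adj (j, none) (k, some c) := by
        rw [adj_none hj]; rintro ⟨hh, -⟩; exact hkj hh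
      have h3 : ((k, some c) : Fin n × Option V) ≠ (i, none) := by simp
      have h4 : ((k, some c) : Fin n × Option V) ≠ (j, none) := by simp
      have := hout (k, some c) h1 h2 h3 h4
      rwa [adj_some_lt hi hki, adj_some_lt hj hkj] at this
    have hwv : G.Adj w v := (adj_some_lt hj (Ne.symm hji)).mp hx'y
    exact ⟨u, v, rfl, rfl, (hNuw v).mpr hwv⟩
  · rintro ⟨u, v, rfl, rfl, huv⟩
    have hz : (Shu t n G).Adj (i, none) (i, some u) := (adj_none hi).mpr ⟨rfl, by simp⟩
    have hz2 : (Shu t n G).Adj (i, none) (i, some v) := (adj_none hi).mpr ⟨rfl, by simp⟩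
    have h0 : (0 : ℕ) < n := by omega
    have h1 : (1 : ℕ) < n := by omega
    set j : Fin n := if i.val = 0 then ⟨1, h1⟩ else ⟨0, h0⟩ with hjdef
    have hjt : j.val < t := by
      simp only [hjdef]; split_ifs <;> simpa using by omega
    have hji : j ≠ i := by
      simp only [hjdef]; split_ifs with hh <;> simp [Fin.ext_iff] <;> omega
    refine ⟨hz, hz2, (j, none), (j, some u),
      (isZ1_iff hc hE ht htn hpar).mpr ⟨rfl, hjt⟩,
      fun hh => hji (congrArg Prod.fst hh), (adj_none hjt).mpr ⟨rfl, by simp⟩, ?_,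
      (adj_some_lt hjt (Ne.symm hji)).mpr huv⟩
    rintro ⟨k, oc⟩ hw1 hw2 hw3 hw4
    match oc with
    | none =>
      have hki : k ≠ i := fun hh => hw3 (by rw [hh])
      have hkj : k ≠ j := fun hh => hw4 (by rw [hh])
      exact iff_of_false (not_adj_some_none hi hki) (not_adj_some_none hjt hkj)
    | some c =>
      have hki : k ≠ i := by
        intro hh; exact hw1 ((adj_none hi).mpr ⟨hh, by simp⟩)
      have hkj : k ≠ j := by
        intro hh; exact hw2 ((adj_none hjt).mpr ⟨hh, by simp⟩)
      rw [adj_some_lt hi hki, adj_some_lt hjt hkj]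

lemma rel_iff' (hc : G.Connected) (hE : ∃ a b, G.Adj a b)
    (ht : 2 ≤ t) (htn : t < n) (hpar : Even (n - t)) {i : Fin n} (hi : i.val < t)
    {u v : V} :
    Rel (Shu t n G) (i, none) (i, some u) (i, some v) ↔ G.Adj u v := by
  rw [rel_iff hc hE ht htn hpar hi]
  constructor
  · rintro ⟨u', v', hu, hv, h⟩
    simp only [Prod.mk.injEq, Option.some.injEq] at hu hv
    exact hu.2 ▸ hv.2 ▸ h
  · exact fun h => ⟨u, v, rfl, rfl, h⟩

/-- The hom placing `G` into copy `i`. -/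
def copyHom (G : SimpleGraph V) (t n : ℕ) (i : Fin n) : G →g Shu t n G where
  toFun v := (i, some v)
  map_rel' h := Or.inl ⟨_, _, rfl, rfl, h⟩

lemma shu_connected (hc : G.Connected) (hE : ∃ a b, G.Adj a b)
    (ht : 2 ≤ t) (htn : t < n) (hpar : Even (n - t)) : (Shu t n G).Connected := by
  obtain ⟨p, hp⟩ := hpar
  obtain ⟨a, b, hab⟩ := hE
  have h0 : (0 : ℕ) < n := by omega
  set i0 : Fin n := ⟨0, h0⟩ with hi0
  have reach_some : ∀ (k : Fin n) (v : V),
      (Shu t n G).Reachable (k, some v) (i0, some a) := by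
    intro k v
    have r1 : (Shu t n G).Reachable (k, some v) (k, some a) :=
      (hc.preconnected v a).map (copyHom G t n k)
    have h1 : (Shu t n G).Adj (k, some a) (i0, some b) := Or.inl ⟨a, b, rfl, rfl, hab⟩
    have h2 : (Shu t n G).Adj (i0, some b) (i0, some a) :=
      Or.inl ⟨b, a, rfl, rfl, hab.symm⟩
    exact r1.trans (h1.reachable.trans h2.reachable)
  have reach : ∀ x : Fin n × Option V, (Shu t n G).Reachable x (i0, some a) := by
    rintro ⟨k, ox⟩
    match ox with
    | some v => exact reach_some k v
    | none =>
      by_cases hk : k.val < t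
      · have h1 : (Shu t n G).Adj (k, none) (k, some a) := (adj_none hk).mpr ⟨rfl, by simp⟩
        exact h1.reachable.trans (reach_some k a)
      · push_neg at hk
        have hin : k.val < n := k.isLt
        have hk' : n + t - 1 - k.val < n := by omega
        have h1 : (Shu t n G).Adj (k, none) ((⟨n + t - 1 - k.val, hk'⟩ : Fin n), some a) := by
          refine Or.inr (Or.inr ⟨?_, ?_, hk, ?_⟩)
          · intro hh
            have h2 : k.val = n + t - 1 - k.val := congrArg Fin.val hh
            omega
          · show k.val + (n + t - 1 - k.val) = n + t - 1
            omega
          · show t ≤ n + t - 1 - k.val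
            omega
        exact h1.reachable.trans (reach_some _ a)
  rw [SimpleGraph.connected_iff]
  exact ⟨fun x y => (reach x).trans (reach y).symm, ⟨(i0, none)⟩⟩

lemma shu_not_preconnected (hNE : ∀ a b, ¬ G.Adj a b)
    (ht : 2 ≤ t) (htn : t < n) : ¬ (Shu t n G).Preconnected := by
  intro h
  have h0 : (0 : ℕ) < n := by omega
  have h1 : (1 : ℕ) < n := by omega
  set f : Fin n × Option V → ℕ := fun x => min x.1.val (n + t - 1 - x.1.val) with hf
  have step : ∀ {x y : Fin n × Option V}, (Shu t n G).Adj x y → f x = f y := by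
    rintro x y (⟨u, v, -, -, hab⟩ | ⟨h1', -, -⟩ | ⟨-, h2', h3', h4'⟩)
    · exact absurd hab (hNE u v)
    · simp [hf, h1']
    · have hx : x.1.val < n := x.1.isLt
      have hy : y.1.val < n := y.1.isLt
      simp only [hf]
      rw [show n + t - 1 - x.1.val = y.1.val by omega,
        show n + t - 1 - y.1.val = x.1.val by omega, Nat.min_comm]
  have key : ∀ {x y : Fin n × Option V} (_ : (Shu t n G).Walk x y), f x = f y := by
    intro x y p
    induction p with
    | nil => rfl
    | cons h _ ih => exact (step h).trans ih
  obtain ⟨p⟩ := h (⟨0, h0⟩, none) (⟨1, h1⟩, none)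
  have := key p
  simp only [hf] at this
  rw [Nat.zero_min, Nat.min_eq_left (by omega)] at this
  omega

lemma eq_of_no_edges (hc : G.Connected) (hNE : ∀ a b, ¬ G.Adj a b) (a b : V) :
    a = b := by
  obtain ⟨p⟩ := hc.preconnected a b
  cases p with
  | nil => rfl
  | cons h _ => exact absurd h (hNE _ _)

end ShuAux

open ShuAux in
theorem stmt_17 {V₁ V₂ : Type*} (G₁ : SimpleGraph V₁) (G₂ : SimpleGraph V₂)
    (hc₁ : G₁.Connected) (hc₂ : G₂.Connected)
    (t n : ℕ) (ht : 2 ≤ t) (htn : t < n) (heven : Even (n - t)) :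
    Nonempty (Shu t n G₁ ≃g Shu t n G₂) ↔ Nonempty (G₁ ≃g G₂) := by
  constructor
  · rintro ⟨φ⟩
    by_cases hE1 : ∃ a b, G₁.Adj a b
    · by_cases hE2 : ∃ a b, G₂.Adj a b
      · -- main reconstruction
        have h0 : (0 : ℕ) < n := by omega
        set i0 : Fin n := ⟨0, h0⟩ with hi0def
        have hi0 : i0.val < t := show (0 : ℕ) < t by omega
        have hz1 : IsZ1 (Shu t n G₁) (i0, (none : Option V₁)) :=
          (isZ1_iff hc₁ hE1 ht htn heven).mpr ⟨rfl, hi0⟩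
        have hz2 : IsZ1 (Shu t n G₂) (φ (i0, none)) := hz1.map φ
        obtain ⟨j, ozj, hφz⟩ : ∃ j ozj, φ (i0, (none : Option V₁)) = (j, ozj) :=
          ⟨_, _, rfl⟩
        rw [hφz] at hz2
        obtain ⟨hoz, hj⟩ := (isZ1_iff hc₂ hE2 ht htn heven).mp hz2
        subst hoz
        have hsymmz : φ.symm (j, (none : Option V₂)) = (i0, none) := by
          rw [← hφz, RelIso.symm_apply_apply]
        have hψ : ∀ v : V₁, ∃ w : V₂, φ (i0, some v) = (j, some w) := by
          intro v
          have hadj : (Shu t n G₂).Adj (j, none) (φ (i0, some v)) := by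
            rw [← hφz]
            exact φ.map_adj_iff.mpr ((adj_none hi0).mpr ⟨rfl, by simp⟩)
          have h := (adj_none hj).mp hadj
          obtain ⟨w, hw⟩ := Option.ne_none_iff_exists'.mp h.2
          exact ⟨w, Prod.ext h.1 hw⟩
        have hψ' : ∀ w : V₂, ∃ v : V₁, φ.symm (j, some w) = (i0, some v) := by
          intro w
          have hadj : (Shu t n G₁).Adj (i0, none) (φ.symm (j, some w)) := by
            rw [← hsymmz]
            exact φ.symm.map_adj_iff.mpr ((adj_none hj).mpr ⟨rfl, by simp⟩)
          have h := (adj_none hi0).mp hadj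
          obtain ⟨v, hv⟩ := Option.ne_none_iff_exists'.mp h.2
          exact ⟨v, Prod.ext h.1 hv⟩
        choose ψ hψeq using hψ
        choose ψ' hψ'eq using hψ'
        have hleft : ∀ v, ψ' (ψ v) = v := by
          intro v
          have h := hψ'eq (ψ v)
          rw [← hψeq v, RelIso.symm_apply_apply] at h
          exact (Option.some_injective _ (congrArg Prod.snd h)).symm
        have hright : ∀ w, ψ (ψ' w) = w := by
          intro w
          have h := hψeq (ψ' w)
          rw [← hψ'eq w, RelIso.apply_symm_apply] at h
          exact (Option.some_injective _ (congrArg Prod.snd h)).symm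
        refine ⟨⟨⟨ψ, ψ', hleft, hright⟩, ?_⟩⟩
        intro a b
        show G₂.Adj (ψ a) (ψ b) ↔ G₁.Adj a b
        constructor
        · intro h2
          have hrel2 : Rel (Shu t n G₂) (j, none) (j, some (ψ a)) (j, some (ψ b)) :=
            (rel_iff' hc₂ hE2 ht htn heven hj).mpr h2
          have hrel1 := hrel2.map φ.symm
          rw [hsymmz, hψ'eq (ψ a), hψ'eq (ψ b), hleft a, hleft b] at hrel1
          exact (rel_iff' hc₁ hE1 ht htn heven hi0).mp hrel1
        · intro h1
          have hrel1 : Rel (Shu t n G₁) (i0, none) (i0, some a) (i0, some b) :=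
            (rel_iff' hc₁ hE1 ht htn heven hi0).mpr h1
          have hrel2 := hrel1.map φ
          rw [hφz, hψeq a, hψeq b] at hrel2
          exact (rel_iff' hc₂ hE2 ht htn heven hj).mp hrel2
      · exfalso
        push_neg at hE2
        have hcon : (Shu t n G₂).Connected :=
          φ.connected_iff.mp (shu_connected hc₁ hE1 ht htn heven)
        exact shu_not_preconnected hE2 ht htn hcon.preconnected
    · by_cases hE2 : ∃ a b, G₂.Adj a b
      · exfalso
        push_neg at hE1
        have hcon : (Shu t n G₁).Connected :=
          φ.symm.connected_iff.mp (shu_connected hc₂ hE2 ht htn heven)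
        exact shu_not_preconnected hE1 ht htn hcon.preconnected
      · push_neg at hE1; push_neg at hE2
        haveI : Subsingleton V₁ := ⟨eq_of_no_edges hc₁ hE1⟩
        haveI : Subsingleton V₂ := ⟨eq_of_no_edges hc₂ hE2⟩
        obtain ⟨a⟩ := hc₁.nonempty
        obtain ⟨b⟩ := hc₂.nonempty
        refine ⟨⟨equivOfSubsingletonOfSubsingleton (fun _ => b) (fun _ => a), ?_⟩⟩
        intro x y
        exact iff_of_false (hE2 _ _) (hE1 _ _)
  · rintro ⟨e⟩
    refine ⟨⟨Equiv.prodCongr (Equiv.refl (Fin n)) e.toEquiv.optionCongr, ?_⟩⟩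
    rintro ⟨i, ox⟩ ⟨k, oy⟩
    simp only [Equiv.prodCongr_apply, Equiv.coe_refl, Prod.map, id_eq,
      Equiv.optionCongr_apply]
    constructor
    · rintro (⟨u, v, hu, hv, huv⟩ | ⟨h1, h2, h3⟩ | h3)
      · simp only [Option.map_eq_some_iff] at hu hv
        obtain ⟨u₀, rfl, rfl⟩ := hu
        obtain ⟨v₀, rfl, rfl⟩ := hv
        exact Or.inl ⟨u₀, v₀, rfl, rfl, e.map_adj_iff.mp huv⟩
      · refine Or.inr (Or.inl ⟨h1, h2, fun hh => h3 ?_⟩)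
        simp only at hh ⊢
        rw [hh]
      · exact Or.inr (Or.inr h3)
    · rintro (⟨u, v, hu, hv, huv⟩ | ⟨h1, h2, h3⟩ | h3)
      · subst hu; subst hv
        exact Or.inl ⟨e u, e v, rfl, rfl, e.map_adj_iff.mpr huv⟩
      · refine Or.inr (Or.inl ⟨h1, h2, fun hh => h3 ?_⟩)
        simp only at hh ⊢
        exact (Option.map_injective e.injective) hh
      · exact Or.inr (Or.inr h3)
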